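/- Let A and B be n×n complex Hermitian matrices. Then the decreasing eigenvalue list of A+B is majorized by the sum of the decreasing eigenvalue lists of A and B: for every k with 1 ≤ k ≤ n, ∑_{i=1}^{k} λ_i(A+B) ≤ ∑_{i=1}^{k} λ_i(A) + ∑_{i=1}^{k} λ_i(B). -/

import Mathlib

open Matrix Finset

-- abstract weight lemma
lemma weight_sum_le {n k : ℕ} (hk1 : 1 ≤ k) (hk : k ≤ n) (μ : Fin n → ℝ) (hμ : Antitone μ)
    (d : Fin n → ℝ) (hd0 : ∀ j, 0 ≤ d j) (hd1 : ∀ j, d j ≤ 1) (hsum : ∑ j, d j = k) :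
    ∑ j, μ j * d j ≤ ∑ i : Fin k, μ (Fin.castLE hk i) := by
  set t := μ ⟨k - 1, by omega⟩ with ht
  have h1 : ∀ j : Fin n, (μ j - t) * d j ≤ (if (j : ℕ) < k then μ j - t else 0) := by
    intro j
    by_cases h : (j : ℕ) < k
    · simp only [if_pos h]
      have hjt : t ≤ μ j := hμ (by simp [Fin.le_def]; omega)
      nlinarith [hd0 j, hd1 j]
    · simp only [if_neg h]
      have hjt : μ j ≤ t := hμ (by simp [Fin.le_def]; omega)
      nlinarith [hd0 j]
  have h2 : ∑ j, ((μ j - t) * d j) ≤ ∑ j : Fin n, (if (j : ℕ) < k then μ j - t else 0) :=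
    Finset.sum_le_sum fun j _ => h1 j
  have hmap : (univ : Finset (Fin k)).map (Fin.castLEEmb hk) =
      univ.filter (fun j : Fin n => (j : ℕ) < k) := by
    ext j
    simp only [Finset.mem_map, Finset.mem_univ, true_and, Finset.mem_filter,
      Fin.castLEEmb, Function.Embedding.coeFn_mk]
    constructor
    · rintro ⟨i, rfl⟩; exact i.2
    · intro h; exact ⟨⟨j, h⟩, rfl⟩
  have h3 : ∑ j : Fin n, (if (j : ℕ) < k then μ j - t else 0)
      = ∑ i : Fin k, (μ (Fin.castLE hk i) - t) := by
    rw [← Finset.sum_filter, ← hmap, Finset.sum_map]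
    rfl
  have e2 : ∑ i : Fin k, (μ (Fin.castLE hk i) - t) = ∑ i : Fin k, μ (Fin.castLE hk i) - k * t := by
    rw [Finset.sum_sub_distrib, Finset.sum_const, Finset.card_univ, Fintype.card_fin]
    push_cast; ring
  have e1 : ∑ j, μ j * d j = ∑ j, ((μ j - t) * d j) + t * (∑ j, d j) := by
    rw [Finset.mul_sum, ← Finset.sum_add_distrib]
    congr 1; ext j; ring
  rw [e1, hsum]
  rw [h3, e2] at h2
  linarith

lemma kyFan_trace_le {n k : ℕ} (hk1 : 1 ≤ k) (hk : k ≤ n)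
    {M : Matrix (Fin n) (Fin n) ℂ} (hM : M.IsHermitian)
    (μ : Fin n → ℝ) (hμ : Antitone μ) (e : Equiv.Perm (Fin n))
    (he : ∀ i, μ (e i) = hM.eigenvalues i)
    (V : Matrix (Fin n) (Fin k) ℂ) (hV : Vᴴ * V = 1) :
    ((Vᴴ * M * V).trace).re ≤ ∑ i : Fin k, μ (Fin.castLE hk i) := by
  set U : Matrix (Fin n) (Fin n) ℂ := (hM.eigenvectorUnitary : Matrix (Fin n) (Fin n) ℂ) with hU
  have hU1 : Uᴴ * U = 1 := by
    rw [hU, ← Matrix.star_eq_conjTranspose]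
    exact Unitary.coe_star_mul_self hM.eigenvectorUnitary
  have hU2 : U * Uᴴ = 1 := by
    rw [hU, ← Matrix.star_eq_conjTranspose]
    exact Unitary.coe_mul_star_self hM.eigenvectorUnitary
  set W : Matrix (Fin n) (Fin k) ℂ := Uᴴ * V with hW
  have hWW : Wᴴ * W = 1 := by
    rw [hW, conjTranspose_mul, conjTranspose_conjTranspose, Matrix.mul_assoc,
      ← Matrix.mul_assoc U, hU2, Matrix.one_mul, hV]
  set D : Matrix (Fin n) (Fin n) ℂ := diagonal ((RCLike.ofReal : ℝ → ℂ) ∘ hM.eigenvalues) with hD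
  have htr : Vᴴ * M * V = Wᴴ * D * W := by
    rw [hW, conjTranspose_mul, conjTranspose_conjTranspose]
    conv_lhs => rw [hM.spectral_theorem]
    simp only [Unitary.conjStarAlgAut_apply, Matrix.mul_assoc, hD, hU, Matrix.star_eq_conjTranspose]
  set P : Matrix (Fin n) (Fin n) ℂ := W * Wᴴ with hP
  set d : Fin n → ℝ := fun j => ∑ i, Complex.normSq (W j i) with hd
  have hPjj : ∀ j, P j j = ((d j : ℝ) : ℂ) := by
    intro j
    simp only [hP, Matrix.mul_apply, conjTranspose_apply, hd, Complex.ofReal_sum]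
    refine Finset.sum_congr rfl fun i _ => ?_
    rw [RCLike.star_def, Complex.mul_conj]
  have hPP : P * P = P := by
    rw [hP, Matrix.mul_assoc, ← Matrix.mul_assoc Wᴴ, hWW, Matrix.one_mul]
  have hPH : Pᴴ = P := by
    rw [hP, conjTranspose_mul, conjTranspose_conjTranspose]
  have hd0 : ∀ j, 0 ≤ d j := fun j => Finset.sum_nonneg fun i _ => Complex.normSq_nonneg _
  have hd1 : ∀ j, d j ≤ 1 := by
    intro j
    have h1 : P j j = ∑ i, ((Complex.normSq (P j i) : ℝ) : ℂ) := by
      conv_lhs => rw [← hPP]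
      rw [Matrix.mul_apply]
      refine Finset.sum_congr rfl fun i _ => ?_
      have hij : P i j = star (P j i) := by
        conv_lhs => rw [← hPH]
        rw [conjTranspose_apply]
      rw [hij, RCLike.star_def, Complex.mul_conj]
    have h2 : d j = ∑ i, Complex.normSq (P j i) := by
      have := congrArg Complex.re h1
      simpa [hPjj j, ← Complex.ofReal_sum] using this
    have h3 : Complex.normSq (P j j) ≤ ∑ i, Complex.normSq (P j i) :=
      Finset.single_le_sum (f := fun i => Complex.normSq (P j i))
        (fun i _ => Complex.normSq_nonneg _) (Finset.mem_univ j)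
    have h4 : Complex.normSq (P j j) = d j ^ 2 := by
      rw [hPjj j, Complex.normSq_ofReal]; ring
    nlinarith [hd0 j]
  have hdsum : ∑ j, d j = k := by
    have h1 : ∀ i : Fin k, (Wᴴ * W) i i = 1 := by
      intro i; rw [hWW]; simp [Matrix.one_apply]
    have h2 : ∑ j, ((d j : ℝ) : ℂ) = (k : ℂ) := by
      have hcomm : ∑ j, ∑ i, (W j i * star (W j i)) = ∑ i : Fin k, ∑ j, (star (W j i) * W j i) := by
        rw [Finset.sum_comm]
        exact Finset.sum_congr rfl fun j _ => Finset.sum_congr rfl fun i _ => by ring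
      calc ∑ j, ((d j : ℝ) : ℂ) = ∑ j, ∑ i, (W j i * star (W j i)) := by
            refine Finset.sum_congr rfl fun j _ => ?_
            simp only [hd, Complex.ofReal_sum]
            refine Finset.sum_congr rfl fun i _ => ?_
            rw [RCLike.star_def, Complex.mul_conj]
        _ = ∑ i : Fin k, ∑ j, (star (W j i) * W j i) := hcomm
        _ = ∑ i : Fin k, (Wᴴ * W) i i := by
            refine Finset.sum_congr rfl fun i _ => ?_
            rw [Matrix.mul_apply]
            exact Finset.sum_congr rfl fun j _ => by rw [conjTranspose_apply]
        _ = (k : ℂ) := by simp [h1]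
    have := congrArg Complex.re h2
    simpa [← Complex.ofReal_sum] using this
  have htrace : ((Vᴴ * M * V).trace).re = ∑ j, hM.eigenvalues j * d j := by
    rw [htr]
    have e1 : (Wᴴ * D * W).trace = (P * D).trace := by
      rw [Matrix.trace_mul_comm, ← Matrix.mul_assoc]
    rw [e1]
    have e2 : (P * D).trace = ∑ j, P j j * ((hM.eigenvalues j : ℝ) : ℂ) := by
      simp [Matrix.trace, Matrix.diag, Matrix.mul_apply, hD, Matrix.diagonal_apply,
        Finset.sum_ite_eq]
    rw [e2]
    have e3 : ∑ j, P j j * ((hM.eigenvalues j : ℝ) : ℂ)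
        = ((∑ j, hM.eigenvalues j * d j : ℝ) : ℂ) := by
      rw [Complex.ofReal_sum]
      refine Finset.sum_congr rfl fun j _ => ?_
      rw [hPjj j]
      push_cast; ring
    rw [e3, Complex.ofReal_re]
  rw [htrace]
  have hre : ∑ j, hM.eigenvalues j * d j = ∑ j, μ j * d (e.symm j) := by
    rw [← Equiv.sum_comp e (fun j => μ j * d (e.symm j))]
    refine Finset.sum_congr rfl fun j _ => ?_
    rw [← he j, Equiv.symm_apply_apply]
  rw [hre]
  exact weight_sum_le hk1 hk μ hμ (fun j => d (e.symm j)) (fun j => hd0 _) (fun j => hd1 _)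
    (by rw [Equiv.sum_comp e.symm d, hdsum])


/-- The decreasing eigenvalue list of `A + B` is majorized by the sum of the decreasing
eigenvalue lists of the Hermitian matrices `A` and `B`. -/
theorem eigenvalues_add_majorized {n : ℕ} (A B : Matrix (Fin n) (Fin n) ℂ)
    (hA : A.IsHermitian) (hB : B.IsHermitian) (hAB : (A + B).IsHermitian)
    (μA μB μAB : Fin n → ℝ)
    (hμA : Antitone μA) (hμB : Antitone μB) (hμAB : Antitone μAB)
    (hpA : ∃ e : Equiv.Perm (Fin n), ∀ i, μA (e i) = hA.eigenvalues i)
    (hpB : ∃ e : Equiv.Perm (Fin n), ∀ i, μB (e i) = hB.eigenvalues i)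
    (hpAB : ∃ e : Equiv.Perm (Fin n), ∀ i, μAB (e i) = hAB.eigenvalues i) :
    ∀ (k : ℕ), 1 ≤ k → ∀ (hk : k ≤ n),
      ∑ i : Fin k, μAB (Fin.castLE hk i) ≤
        ∑ i : Fin k, μA (Fin.castLE hk i) + ∑ i : Fin k, μB (Fin.castLE hk i) := by

  intro k hk1 hk
  obtain ⟨eA, heA⟩ := hpA
  obtain ⟨eB, heB⟩ := hpB
  obtain ⟨eAB, heAB⟩ := hpAB
  set σ : Fin k → Fin n := fun i => eAB.symm (Fin.castLE hk i) with hσ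
  have hσinj : Function.Injective σ := by
    intro i j h
    have h2 := eAB.symm.injective h
    exact Fin.castLE_injective hk h2
  set U : Matrix (Fin n) (Fin n) ℂ := (hAB.eigenvectorUnitary : Matrix (Fin n) (Fin n) ℂ) with hU
  have hU1 : Uᴴ * U = 1 := by
    rw [hU, ← Matrix.star_eq_conjTranspose]
    exact Unitary.coe_star_mul_self hAB.eigenvectorUnitary
  set V : Matrix (Fin n) (Fin k) ℂ := U.submatrix id σ with hV
  have hconj : ∀ M : Matrix (Fin n) (Fin n) ℂ,
      Vᴴ * M * V = (Uᴴ * M * U).submatrix σ σ := by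
    intro M
    have h1 : (Uᴴ * M * U).submatrix σ σ = (Uᴴ * M).submatrix σ id * U.submatrix id σ :=
      Matrix.submatrix_mul _ _ _ _ _ Function.bijective_id
    have h2 : (Uᴴ * M).submatrix σ id = Uᴴ.submatrix σ id * M := by
      rw [Matrix.submatrix_mul Uᴴ M σ id id Function.bijective_id, Matrix.submatrix_id_id]
    rw [hV, conjTranspose_submatrix, h1, h2]
  have hVV : Vᴴ * V = 1 := by
    have h3 : (Uᴴ * U).submatrix σ σ = Uᴴ.submatrix σ id * U.submatrix id σ :=
      Matrix.submatrix_mul _ _ _ _ _ Function.bijective_id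
    rw [hV, conjTranspose_submatrix, ← h3, hU1]
    exact Matrix.submatrix_one σ hσinj
  have hdiag : Uᴴ * (A + B) * U = diagonal ((RCLike.ofReal : ℝ → ℂ) ∘ hAB.eigenvalues) := by
    have := hAB.conjStarAlgAut_star_eigenvectorUnitary
    rw [Unitary.conjStarAlgAut_star_apply] at this
    rwa [Matrix.star_eq_conjTranspose] at this
  have heq : ((Vᴴ * (A + B) * V).trace).re = ∑ i : Fin k, μAB (Fin.castLE hk i) := by
    rw [hconj (A + B), hdiag, Matrix.submatrix_diagonal _ σ hσinj, Matrix.trace_diagonal]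
    have h4 : ∀ i : Fin k, (((RCLike.ofReal : ℝ → ℂ) ∘ hAB.eigenvalues) ∘ σ) i
        = ((μAB (Fin.castLE hk i) : ℝ) : ℂ) := by
      intro i
      have h5 : hAB.eigenvalues (σ i) = μAB (Fin.castLE hk i) := by
        rw [← heAB (σ i), hσ]
        simp
      simp [Function.comp, h5]
    have h6 : ∑ i : Fin k, (((RCLike.ofReal : ℝ → ℂ) ∘ hAB.eigenvalues) ∘ σ) i
        = ((∑ i : Fin k, μAB (Fin.castLE hk i) : ℝ) : ℂ) := by
      rw [Complex.ofReal_sum]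
      exact Finset.sum_congr rfl fun i _ => h4 i
    rw [h6, Complex.ofReal_re]
  have hsplit : ((Vᴴ * (A + B) * V).trace).re
      = ((Vᴴ * A * V).trace).re + ((Vᴴ * B * V).trace).re := by
    rw [Matrix.mul_add, Matrix.add_mul, Matrix.trace_add, Complex.add_re]
  rw [← heq, hsplit]
  exact add_le_add
    (kyFan_trace_le hk1 hk hA μA hμA eA heA V hVV)
    (kyFan_trace_le hk1 hk hB μB hμB eB heB V hVV)
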